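/- In Ω¹_R/dR for R = ℂ[t,t⁻¹,u] with uᵐ = k(t), for all i,j ∈ ℤ and l ∈ {1,...,m-1} with 2l ≤ m-1, one has tⁱuˡ·d(tʲuˡ) ≡ ((j-i)/2)·tⁱ⁺ʲ⁻¹u²ˡ·dt modulo dR. -/

import Mathlib

noncomputable section

abbrev LA : Type := LaurentPolynomial ℂ

/-- The superelliptic ring `R = ℂ[t,t⁻¹,u]` with `u^m = k(t)`. -/
abbrev SER (m : ℕ) (k : Polynomial ℂ) : Type :=
  AdjoinRoot ((Polynomial.X : Polynomial LA) ^ m - Polynomial.C k.toLaurent)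

/-- `t^i ∈ R` for `i : ℤ`. -/
def tpow (m : ℕ) (k : Polynomial ℂ) (i : ℤ) : SER m k :=
  AdjoinRoot.of _ (LaurentPolynomial.T i)

/-- `u ∈ R`. -/
def uu (m : ℕ) (k : Polynomial ℂ) : SER m k := AdjoinRoot.root _

/-- The universal derivation `d : R → Ω¹_{R/ℂ}`. -/
def Dd (m : ℕ) (k : Polynomial ℂ) :
    Derivation ℂ (SER m k) (KaehlerDifferential ℂ (SER m k)) :=
  KaehlerDifferential.D ℂ (SER m k)

/-- The subspace `dR ⊆ Ω¹_R` of exact differentials. -/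
def dR (m : ℕ) (k : Polynomial ℂ) : Submodule ℂ (KaehlerDifferential ℂ (SER m k)) :=
  LinearMap.range (Dd m k).toLinearMap

/-- The quotient `Ω¹_R / dR`. -/
abbrev OmQ (m : ℕ) (k : Polynomial ℂ) := KaehlerDifferential ℂ (SER m k) ⧸ dR m k

/-- The class of a differential in `Ω¹_R / dR`. -/
def cl (m : ℕ) (k : Polynomial ℂ) (w : KaehlerDifferential ℂ (SER m k)) : OmQ m k :=
  Submodule.Quotient.mk w

/-- The polynomial `k(t) = Σ_{i=0}^d a_i t^i`. -/
def kpoly (d : ℕ) (a : ℕ → ℂ) : Polynomial ℂ :=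
  ∑ i ∈ Finset.range (d + 1), Polynomial.C (a i) * Polynomial.X ^ i

lemma tpow_add (m : ℕ) (k : Polynomial ℂ) (a b : ℤ) :
    tpow m k a * tpow m k b = tpow m k (a + b) := by
  unfold tpow; rw [← map_mul, ← LaurentPolynomial.T_add]

lemma tpow_zero (m : ℕ) (k : Polynomial ℂ) : tpow m k 0 = 1 := by
  unfold tpow; rw [LaurentPolynomial.T_zero, map_one]

lemma D_tpow (m : ℕ) (k : Polynomial ℂ) (j : ℤ) :
    Dd m k (tpow m k j) = j • (tpow m k (j - 1) • Dd m k (tpow m k 1)) := by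
  induction j using Int.induction_on with
  | zero => simp [tpow_zero]
  | succ n ih =>
      have h : tpow m k (n + 1) = tpow m k n * tpow m k 1 := by
        rw [tpow_add]
      rw [h, Derivation.leibniz, ih, add_sub_cancel_right]
      rw [smul_comm, smul_smul, tpow_add,
        show (1:ℤ) + ((n:ℤ) - 1) = (n:ℤ) by ring, add_smul, one_smul, add_comm]
  | pred n ih =>
      have h : tpow m k (-(n:ℤ)) = tpow m k (-(n:ℤ) - 1) * tpow m k 1 := by
        rw [tpow_add]; ring_nf
      have key := ih
      rw [h, Derivation.leibniz] at key
      -- key : tpow (-n-1) • D t1 + t1 • D (tpow (-n-1)) = -n • (tpow (-n-1) • D t1)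
      have h2 : tpow m k 1 • Dd m k (tpow m k (-(n:ℤ) - 1))
          = (-(n:ℤ) - 1) • (tpow m k (-(n:ℤ) - 1) • Dd m k (tpow m k 1)) := by
        have := key
        rw [sub_smul, one_smul]
        linear_combination (norm := module) this
      have h3 := congrArg (fun w => tpow m k (-1) • w) h2
      simp only [smul_smul, smul_comm (tpow m k (-1))] at h3
      rw [tpow_add, tpow_add, show (1:ℤ) + (-1:ℤ) = 0 by ring, tpow_zero, one_smul,
        show -(n:ℤ) - 1 + (-1:ℤ) = -(n:ℤ) - 1 - 1 by ring] at h3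
      exact h3

theorem stmt11 (m : ℕ) (hm : 2 ≤ m) (k : Polynomial ℂ) (i j : ℤ)
    (l : ℕ) (hl1 : 1 ≤ l) (hl2 : 2 * l ≤ m - 1) :
    cl m k ((tpow m k i * uu m k ^ l) • Dd m k (tpow m k j * uu m k ^ l))
      = (((j : ℂ) - (i : ℂ)) / 2) •
          cl m k ((tpow m k (i + j - 1) * uu m k ^ (2 * l)) • Dd m k (tpow m k 1)) := by
  set u := uu m k with hu
  set T1 := Dd m k (tpow m k 1) with hT1
  set Du := Dd m k u with hDu
  set A := (tpow m k i * u ^ l) • Dd m k (tpow m k j * u ^ l) with hA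
  set E2 := (tpow m k (i + j - 1) * u ^ (2 * l)) • T1 with hE2
  have key2 : (2:ℤ) • A = ((j - i) : ℤ) • E2 + Dd m k (tpow m k (i+j) * u ^ (2*l)) := by
    rw [hA, hE2, Derivation.leibniz, Derivation.leibniz, Derivation.leibniz_pow,
      Derivation.leibniz_pow, D_tpow m k j, D_tpow m k (i+j)]
    match_scalars
    · -- coefficient of Du
      push_cast
      rw [show 2*l - 1 = l + (l-1) by omega, pow_add, ← tpow_add]
      ring
    · -- coefficient of T1
      push_cast
      rw [show (i + j - 1 : ℤ) = i + (j - 1) by ring, ← tpow_add]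
      ring
  rw [cl, cl, ← Submodule.Quotient.mk_smul, Submodule.Quotient.eq]
  refine ⟨(1/2 : ℂ) • (tpow m k (i+j) * u ^ (2*l)), ?_⟩
  show Dd m k _ = _
  rw [Derivation.map_smul]
  have key3 : Dd m k (tpow m k (i+j) * u ^ (2*l)) = (2:ℤ) • A - ((j - i : ℤ)) • E2 := by
    rw [eq_sub_iff_add_eq, key2, add_comm]
  rw [key3]
  have hsc1 : (algebraMap ℂ (SER m k)) (1/2) * 2 = (1 : SER m k) := by
    rw [show (2 : SER m k) = (algebraMap ℂ (SER m k)) 2 from (map_ofNat _ 2).symm, ← map_mul]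
    norm_num
  have hsc2 : (algebraMap ℂ (SER m k)) (1/2) * ((j : SER m k) - (i : SER m k))
      = (algebraMap ℂ (SER m k)) (((j:ℂ) - (i:ℂ))/2) := by
    rw [← map_intCast (algebraMap ℂ (SER m k)) j, ← map_intCast (algebraMap ℂ (SER m k)) i,
      ← map_sub, ← map_mul]
    congr 1
    push_cast
    ring
  match_scalars
  · linear_combination (tpow m k i * u ^ l) * hsc1
  · linear_combination (-(tpow m k (i + j - 1) * u ^ (2 * l))) * hsc2
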